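/- With Γ, Γ̂, λ, α, α*, N as in the standing assumptions, let m : Γ̂ → {0,1,...,c} be Borel, H a filter relative to m and α*, and S_H the isometry on K = ⊕_{i=1}^c L²(σ_i, λ) given by (S_H f)(ω) = H(ω)^t f(α*(ω)). Let f ∈ ⋂_{n≥0} S_H^n(K) and set f_n := S_H^{*n} f. Then for every n ≥ 1 and λ-almost all ω: ‖f_n(ω)‖² = N^{-n} ∑_{ζ : α*^n(ζ)=ω} ‖f(ζ)‖², where ‖·‖ is the Euclidean norm on ℂ^c. -/

import Mathlib

/-!
STATEMENT 11 (Lemma `weeglimmer`): If `f ∈ ⋂_{n ≥ 0} S_Hⁿ(K)` and `f_n := S_H*ⁿ f`, then for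
every `n ≥ 1` and λ-almost all `ω`: `‖f_n(ω)‖² = N^{-n} ∑_{α*ⁿ(ζ)=ω} ‖f(ζ)‖²`, where `‖·‖`
is the Euclidean norm on `ℂ^c` (so `‖v‖² = ∑_i ‖v_i‖²`).
-/

open MeasureTheory Matrix Topology

/-- `f` represents an element of `K = ⊕_{i=1}^c L²(σ_i, λ)`. -/
def MemDirectSumL2 {G : Type*} [MeasurableSpace G] (lam : Measure G) (c : ℕ)
    (m : G → ℕ) (f : G → Fin c → ℂ) : Prop :=
  (∀ i : Fin c, Measurable fun ω => f ω i) ∧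
  (∀ (ω : G) (i : Fin c), m ω < (i : ℕ) + 1 → f ω i = 0) ∧
  MeasureTheory.MemLp f 2 lam

/-- The operator `S_H`: `(S_H f)(ω) = H(ω)ᵗ • f(α*(ω))`. -/
noncomputable def filterIsometry {G : Type*} (c : ℕ) (H : G → Matrix (Fin c) (Fin c) ℂ)
    (q : G → G) (f : G → Fin c → ℂ) : G → Fin c → ℂ :=
  fun ω => (H ω)ᵀ.mulVec (f (q ω))

/-- The adjoint `S_H*`: `(S_H* f)(ω) = (1/N) ∑_{q ζ = ω} conj(H(ζ)) • f(ζ)`. -/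
noncomputable def filterAdjoint {G : Type*} (c N : ℕ) (H : G → Matrix (Fin c) (Fin c) ℂ)
    (q : G → G) (f : G → Fin c → ℂ) : G → Fin c → ℂ :=
  fun ω => (N : ℂ)⁻¹ •
    ∑ᶠ ζ : {ζ : G // q ζ = ω}, ((H ζ.1).map (starRingEnd ℂ)).mulVec (f ζ.1)


def fiberEquiv {G : Type*} (q : G → G) (n : ℕ) (ω : G) :
    {ζ : G // q^[n+1] ζ = ω} ≃ (Σ η : {η : G // q^[n] η = ω}, {ζ : G // q ζ = η.1}) where
  toFun ζ := ⟨⟨q ζ.1, by rw [← Function.iterate_succ_apply]; exact ζ.2⟩, ⟨ζ.1, rfl⟩⟩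
  invFun p := ⟨p.2.1, by rw [Function.iterate_succ_apply, p.2.2]; exact p.1.2⟩
  left_inv ζ := Subtype.ext rfl
  right_inv p := Sigma.subtype_ext (Subtype.ext p.2.2) rfl

section Alg11
variable {G : Type*} {c N : ℕ} {H : G → Matrix (Fin c) (Fin c) ℂ} {q : G → G} {m : G → ℕ}

lemma sum_mulVec' {ι : Type*} [Fintype ι] (A : ι → Matrix (Fin c) (Fin c) ℂ) (v : Fin c → ℂ) :
    (∑ x : ι, A x).mulVec v = ∑ x : ι, (A x).mulVec v := by
  ext i
  simp [Matrix.mulVec, dotProduct, Matrix.sum_apply, Finset.sum_apply, Finset.sum_mul]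
  exact Finset.sum_comm

lemma adj_congr_fiber (n : ℕ) (h₁ h₂ : G → Fin c → ℂ) (ω : G)
    (hfib : ∀ ζ, q^[n] ζ = ω → h₁ ζ = h₂ ζ) :
    (filterAdjoint c N H q)^[n] h₁ ω = (filterAdjoint c N H q)^[n] h₂ ω := by
  induction n generalizing h₁ h₂ ω with
  | zero => exact hfib ω rfl
  | succ n ih =>
    rw [Function.iterate_succ_apply, Function.iterate_succ_apply]
    refine ih _ _ _ fun η hη => ?_
    unfold filterAdjoint
    congr 1
    apply finsum_congr
    rintro ⟨ζ, hζ⟩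
    rw [hfib ζ (by rw [Function.iterate_succ_apply, hζ, hη])]

lemma iso_supp (hHsupp : ∀ (ω : G) (i j : Fin c), m ω < (j : ℕ) + 1 → H ω i j = 0)
    (h : G → Fin c → ℂ) (ω : G) (i : Fin c) (him : m ω < (i : ℕ) + 1) :
    filterIsometry c H q h ω i = 0 := by
  show ((H ω)ᵀ.mulVec (h (q ω))) i = 0
  simp only [Matrix.mulVec, dotProduct, Matrix.transpose_apply]
  exact Finset.sum_eq_zero fun j _ => by rw [hHsupp ω j i him, zero_mul]

lemma key_sum (ω : G) [Fintype {ζ : G // q ζ = ω}]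
    (hfil : ∑ ζ : {ζ : G // q ζ = ω}, H ζ.1 * (H ζ.1)ᴴ
      = (N : ℂ) • Matrix.diagonal (fun i : Fin c => if (i : ℕ) + 1 ≤ m ω then (1:ℂ) else 0)) :
    ∑ ζ : {ζ : G // q ζ = ω}, (H ζ.1).map (starRingEnd ℂ) * (H ζ.1)ᵀ
      = (N : ℂ) • Matrix.diagonal (fun i : Fin c => if (i : ℕ) + 1 ≤ m ω then (1:ℂ) else 0) := by
  ext i j
  have e1 : (∑ ζ : {ζ : G // q ζ = ω}, (H ζ.1).map (starRingEnd ℂ) * (H ζ.1)ᵀ) i j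
      = starRingEnd ℂ ((∑ ζ : {ζ : G // q ζ = ω}, H ζ.1 * (H ζ.1)ᴴ) i j) := by
    simp only [Matrix.sum_apply, Matrix.mul_apply, Matrix.map_apply, Matrix.transpose_apply,
      Matrix.conjTranspose_apply, map_sum, _root_.map_mul, RingHomCompTriple.comp_apply]
    simp [RingHom.id_apply, starRingEnd_self_apply, mul_comm]
  rw [e1, hfil]
  simp only [Matrix.smul_apply, Matrix.diagonal_apply, smul_eq_mul, _root_.map_mul, map_natCast]
  split_ifs <;> simp

lemma adj_iso_apply (hN : (N : ℂ) ≠ 0) (ω : G) [Finite {ζ : G // q ζ = ω}]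
    (hfil : ∑ᶠ ζ : {ζ : G // q ζ = ω}, H ζ.1 * (H ζ.1)ᴴ
      = (N : ℂ) • Matrix.diagonal (fun i : Fin c => if (i : ℕ) + 1 ≤ m ω then (1:ℂ) else 0))
    (h : G → Fin c → ℂ) (hsupp : ∀ i : Fin c, m ω < (i : ℕ) + 1 → h ω i = 0) :
    filterAdjoint c N H q (filterIsometry c H q h) ω = h ω := by
  have _inst := Fintype.ofFinite {ζ : G // q ζ = ω}
  rw [finsum_eq_sum_of_fintype] at hfil
  show (N : ℂ)⁻¹ • ∑ᶠ ζ : {ζ : G // q ζ = ω},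
      ((H ζ.1).map (starRingEnd ℂ)).mulVec (filterIsometry c H q h ζ.1) = h ω
  rw [finsum_eq_sum_of_fintype]
  have e1 : ∀ ζ : {ζ : G // q ζ = ω},
      ((H ζ.1).map (starRingEnd ℂ)).mulVec (filterIsometry c H q h ζ.1)
        = ((H ζ.1).map (starRingEnd ℂ) * (H ζ.1)ᵀ).mulVec (h ω) := by
    rintro ⟨ζ, hζ⟩
    show ((H ζ).map (starRingEnd ℂ)).mulVec ((H ζ)ᵀ.mulVec (h (q ζ))) = _
    rw [hζ, Matrix.mulVec_mulVec]
  rw [Finset.sum_congr rfl (fun ζ _ => e1 ζ), ← sum_mulVec', key_sum ω hfil,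
    Matrix.smul_mulVec, smul_smul, inv_mul_cancel₀ hN, one_smul]
  ext i
  rw [Matrix.mulVec_diagonal]
  by_cases hi : (i : ℕ) + 1 ≤ m ω
  · rw [if_pos hi, one_mul]
  · rw [if_neg hi, zero_mul, hsupp i (by omega)]

lemma iso_fiber_normsq (η : G) [Finite {ζ : G // q ζ = η}]
    (hfil : ∑ᶠ ζ : {ζ : G // q ζ = η}, H ζ.1 * (H ζ.1)ᴴ
      = (N : ℂ) • Matrix.diagonal (fun i : Fin c => if (i : ℕ) + 1 ≤ m η then (1:ℂ) else 0))
    (v : Fin c → ℂ) (hv : ∀ i : Fin c, m η < (i : ℕ) + 1 → v i = 0) :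
    ∑ᶠ ζ : {ζ : G // q ζ = η}, (∑ i : Fin c, ‖((H ζ.1)ᵀ.mulVec v) i‖ ^ 2)
      = (N : ℝ) * ∑ i : Fin c, ‖v i‖ ^ 2 := by
  have _inst := Fintype.ofFinite {ζ : G // q ζ = η}
  rw [finsum_eq_sum_of_fintype] at hfil ⊢
  have cast1 : ∀ w : Fin c → ℂ, ((∑ i : Fin c, ‖w i‖ ^ 2 : ℝ) : ℂ)
      = dotProduct (star w) w := by
    intro w
    rw [dotProduct]
    push_cast
    refine Finset.sum_congr rfl fun i _ => ?_
    have h2 : (star (w i)) * w i = ((‖w i‖ ^ 2 : ℝ) : ℂ) := by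
      rw [Complex.star_def, mul_comm, Complex.mul_conj, Complex.normSq_eq_norm_sq]
    rw [Pi.star_apply, h2]
    push_cast
    ring
  apply Complex.ofReal_injective
  push_cast
  calc (∑ ζ : {ζ : G // q ζ = η}, ((∑ i : Fin c, (‖((H ζ.1)ᵀ.mulVec v) i‖:ℂ) ^ 2)))
      = ∑ ζ : {ζ : G // q ζ = η}, dotProduct (star v)
          (((H ζ.1).map (starRingEnd ℂ) * (H ζ.1)ᵀ).mulVec v) := by
        refine Finset.sum_congr rfl fun ζ _ => ?_
        have := cast1 ((H ζ.1)ᵀ.mulVec v)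
        push_cast at this
        rw [this]
        rw [Matrix.star_mulVec, dotProduct_mulVec, Matrix.vecMul_vecMul,
          ← dotProduct_mulVec (star v)]
        have h3 : ((H ζ.1)ᵀ)ᴴ = (H ζ.1).map (starRingEnd ℂ) := by
          ext a b
          simp [Matrix.conjTranspose_apply, Matrix.map_apply, Matrix.transpose_apply]
        rw [h3]
    _ = dotProduct (star v)
          ((∑ ζ : {ζ : G // q ζ = η}, (H ζ.1).map (starRingEnd ℂ) * (H ζ.1)ᵀ).mulVec v) := by
        rw [sum_mulVec']
        simp only [dotProduct, Finset.mul_sum, Finset.sum_apply]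
        rw [Finset.sum_comm]
    _ = (N : ℂ) * ∑ i : Fin c, (‖v i‖:ℂ) ^ 2 := by
        rw [key_sum η hfil, Matrix.smul_mulVec, dotProduct_smul, smul_eq_mul]
        have h4 := cast1 v
        push_cast at h4
        congr 1
        rw [h4, dotProduct, dotProduct]
        refine Finset.sum_congr rfl fun i _ => ?_
        rw [Matrix.mulVec_diagonal]
        by_cases hi : (i : ℕ) + 1 ≤ m η
        · rw [if_pos hi, one_mul]
        · rw [if_neg hi, zero_mul, hv i (by omega), mul_zero]
end Alg11

theorem statement11
    {Γ : Type*} [CommGroup Γ] [Countable Γ] [TopologicalSpace Γ] [DiscreteTopology Γ]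
    [MeasurableSpace (PontryaginDual Γ)] [BorelSpace (PontryaginDual Γ)]
    [CompactSpace (PontryaginDual Γ)]
    (lam : Measure (PontryaginDual Γ)) [lam.IsHaarMeasure] [IsProbabilityMeasure lam]
    (α : Γ →* Γ) (hα : Function.Injective α) (N : ℕ) (hN : 0 < N)
    (hidx : α.range.index = N)
    (q : PontryaginDual Γ → PontryaginDual Γ)
    (hq : ∀ (ω : PontryaginDual Γ) (γ : Γ), q ω γ = ω (α γ))
    (hdense : Dense (⋃ n : ℕ, ⋃ _ : 1 ≤ n, {ω : PontryaginDual Γ | q^[n] ω = 1}))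
    (c : ℕ) (m : PontryaginDual Γ → ℕ) (hm : Measurable m) (hmc : ∀ ω, m ω ≤ c)
    (H : PontryaginDual Γ → Matrix (Fin c) (Fin c) ℂ)
    (hHmeas : ∀ i j, Measurable fun ω => H ω i j)
    (hHsupp : ∀ (ω : PontryaginDual Γ) (i j : Fin c), m ω < (j : ℕ) + 1 → H ω i j = 0)
    (hHfilter : ∀ᵐ ω ∂lam,
      (∑ᶠ ζ : {ζ : PontryaginDual Γ // q ζ = ω}, H ζ.1 * (H ζ.1)ᴴ)
        = (N : ℂ) • Matrix.diagonal
            (fun i : Fin c => if (i : ℕ) + 1 ≤ m ω then (1 : ℂ) else 0))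
    -- `f` lies in `⋂_{n ≥ 0} S_Hⁿ(K)`
    (f : PontryaginDual Γ → Fin c → ℂ) (hf : MemDirectSumL2 lam c m f)
    (hfint : ∀ n : ℕ, ∃ g : PontryaginDual Γ → Fin c → ℂ, MemDirectSumL2 lam c m g ∧
      (filterIsometry c H q)^[n] g =ᵐ[lam] f) :
    ∀ n : ℕ, 1 ≤ n → ∀ᵐ ω ∂lam,
      (∑ i : Fin c, ‖((filterAdjoint c N H q)^[n] f) ω i‖ ^ 2)
        = ((N : ℝ) ^ n)⁻¹ *
            ∑ᶠ ζ : {ζ : PontryaginDual Γ // q^[n] ζ = ω}, ∑ i : Fin c, ‖f ζ.1 i‖ ^ 2 := by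
  -- Q
  set αc : ContinuousMonoidHom Γ Γ := ⟨α, continuous_of_discreteTopology⟩ with hαc
  set Q := PontryaginDual.map αc with hQdef
  have hqQ : q = ⇑Q := by
    funext ω
    exact DFunLike.ext _ _ fun γ => by rw [hq]; rfl
  have qcont : Continuous q := by rw [hqQ]; exact Q.continuous
  have qmeas : Measurable q := qcont.measurable
  have qmul : ∀ x y, q (x * y) = q x * q y := by rw [hqQ]; exact fun x y => map_mul Q x y
  have qinv : ∀ x, q x⁻¹ = (q x)⁻¹ := by rw [hqQ]; exact fun x => map_inv Q x
  -- ker finite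
  have hker1 : ∀ x : PontryaginDual Γ, q x = 1 → ∀ γ ∈ α.range, x γ = 1 := by
    rintro x hx γ ⟨γ', rfl⟩
    have := congrArg (fun (f : PontryaginDual Γ) => f γ') hx
    rw [hq] at this
    exact this
  haveI : α.range.FiniteIndex := ⟨by rw [hidx]; exact hN.ne'⟩
  have hrootfin : Finite {z : ℂ // z ^ N = 1} := by
    have hfin : Set.Finite {z : ℂ | z ^ N = 1} := by
      have hp : (Polynomial.X ^ N - Polynomial.C (1:ℂ)) ≠ 0 :=
        Polynomial.X_pow_sub_C_ne_zero hN 1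
      refine Set.Finite.subset (Polynomial.finite_setOf_isRoot hp) ?_
      intro z hz
      simp only [Set.mem_setOf_eq, Polynomial.IsRoot, Polynomial.eval_sub, Polynomial.eval_pow,
        Polynomial.eval_X, Polynomial.eval_C] at hz ⊢
      rw [hz]; ring
    exact hfin.to_subtype
  have hNpow : ∀ γ : Γ, γ ^ N ∈ α.range := by
    intro γ
    have h1 : (QuotientGroup.mk γ : Γ ⧸ α.range) ^ N = 1 := by
      rw [← hidx, Subgroup.index]
      exact pow_card_eq_one'
    rwa [← QuotientGroup.mk_pow, QuotientGroup.eq_one_iff] at h1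
  have hkerfin : Finite {x : PontryaginDual Γ // q x = 1} := by
    have hemb : Function.Injective
        (fun (x : {x : PontryaginDual Γ // q x = 1}) (cl : Γ ⧸ α.range) =>
          (⟨(x.1 cl.out : ℂ), by
            have h1 : (x.1 cl.out) ^ N = 1 := by
              rw [← map_pow]
              exact hker1 x.1 x.2 _ (hNpow cl.out)
            have := congrArg (fun z : Circle => (z : ℂ)) h1
            push_cast at this
            exact_mod_cast this⟩ : {z : ℂ // z ^ N = 1})) := by
      intro x y hxy
      have hval : ∀ γ : Γ, x.1 γ = y.1 γ := by
        intro γ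
        have h0 := congrArg (fun f => (f (QuotientGroup.mk γ : Γ ⧸ α.range)).1) hxy
        simp only at h0
        have hout : (QuotientGroup.mk γ : Γ ⧸ α.range).out = γ * ((γ⁻¹ * (QuotientGroup.mk γ : Γ ⧸ α.range).out)) := by
          group
        have hmem : γ⁻¹ * (QuotientGroup.mk γ : Γ ⧸ α.range).out ∈ α.range := by
          rw [← QuotientGroup.eq_one_iff, QuotientGroup.mk_mul]
          have : (QuotientGroup.mk (QuotientGroup.mk γ : Γ ⧸ α.range).out : Γ ⧸ α.range)
              = QuotientGroup.mk γ := QuotientGroup.out_eq' _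
          rw [this]
          simp
        have hx1 : x.1 γ = x.1 (QuotientGroup.mk γ : Γ ⧸ α.range).out := by
          conv_lhs => rw [show γ = (QuotientGroup.mk γ : Γ ⧸ α.range).out * (γ⁻¹ * (QuotientGroup.mk γ : Γ ⧸ α.range).out)⁻¹ by group]
          rw [_root_.map_mul, map_inv, hker1 x.1 x.2 _ hmem]
          simp
        have hy1 : y.1 γ = y.1 (QuotientGroup.mk γ : Γ ⧸ α.range).out := by
          conv_lhs => rw [show γ = (QuotientGroup.mk γ : Γ ⧸ α.range).out * (γ⁻¹ * (QuotientGroup.mk γ : Γ ⧸ α.range).out)⁻¹ by group]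
          rw [_root_.map_mul, map_inv, hker1 y.1 y.2 _ hmem]
          simp
        rw [hx1, hy1]
        exact Subtype.ext h0
      exact Subtype.ext (DFunLike.ext _ _ hval)
    exact Finite.of_injective _ hemb
  -- surjectivity
  letI : DivisibleBy (Additive Circle) ℤ :=
    { div := fun a n => if n = 0 then 0 else Circle.expHom (Complex.arg ((Additive.toMul a : Circle) : ℂ) / n)
      div_zero := fun a => by simp
      div_cancel := by
        intro n a hn
        simp only [if_neg hn]
        rw [← map_zsmul Circle.expHom, zsmul_eq_mul,
          mul_div_cancel₀ _ (by exact_mod_cast hn : (n : ℝ) ≠ 0)]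
        show Additive.ofMul (Circle.exp (Complex.arg ((Additive.toMul a : Circle) : ℂ))) = a
        rw [Circle.exp_arg]
        rfl }
  have hsurj : Function.Surjective q := by
    intro ω
    set F : Additive Γ →ₗ[ℤ] Additive Γ := (MonoidHom.toAdditive α).toIntLinearMap with hF
    have hFinj : Function.Injective F := by
      intro a b hab
      have : α (Additive.toMul a) = α (Additive.toMul b) := hab
      exact hα this
    obtain ⟨h, hh⟩ := (Module.ulift_injective_of_injective ℤ
        (Module.Baer.injective (Module.Baer.of_divisible (Additive Circle)))).out F hFinj
      (((ULift.moduleEquiv (R := ℤ) (M := Additive Circle)).symm.toLinearMap).comp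
        (MonoidHom.toAdditive ω.toMonoidHom).toIntLinearMap)
    set ζ₀ : Γ →* Circle := MonoidHom.toAdditive.symm
      (((ULift.moduleEquiv (R := ℤ) (M := Additive Circle)).toLinearMap.comp h).toAddMonoidHom) with hζ₀
    refine ⟨⟨ζ₀, continuous_of_discreteTopology⟩, ?_⟩
    apply DFunLike.ext
    intro γ
    refine (hq _ γ).trans ?_
    show ζ₀ (α γ) = ω γ
    have h1 : ζ₀ (α γ) = Additive.toMul ((ULift.moduleEquiv (R := ℤ) (M := Additive Circle)) (h (F (Additive.ofMul γ)))) := rfl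
    rw [h1, hh]
    rfl
  -- fiber finiteness
  have hfib1 : ∀ ω : PontryaginDual Γ, Finite {ζ : PontryaginDual Γ // q ζ = ω} := by
    intro ω
    obtain ⟨ζ₀, hζ₀⟩ := hsurj ω
    haveI := hkerfin
    refine Finite.of_injective (fun ζ => (⟨ζ.1 * ζ₀⁻¹, by
      rw [qmul, qinv, ζ.2, hζ₀]
      simp⟩ : {x : PontryaginDual Γ // q x = 1})) ?_
    intro a b hab
    have := congrArg Subtype.val hab
    simp only [mul_left_inj] at this
    exact Subtype.ext this
  -- measure preservation
  have hmap : Measure.map q lam = lam := by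
    haveI : (Measure.map q lam).IsMulLeftInvariant := by
      constructor
      intro g
      obtain ⟨ξ, hξ⟩ := hsurj g
      rw [Measure.map_map (measurable_const_mul g) qmeas]
      have hcomp : (fun x => g * x) ∘ q = q ∘ (fun x => ξ * x) := by
        funext x
        simp only [Function.comp_apply]
        rw [qmul, hξ]
      rw [hcomp, ← Measure.map_map qmeas (measurable_const_mul ξ),
        MeasureTheory.map_mul_left_eq_self lam ξ]
    haveI : IsProbabilityMeasure (Measure.map q lam) :=
      Measure.isProbabilityMeasure_map qmeas.aemeasurable
    have heq := Measure.isMulInvariant_eq_smul_of_compactSpace (Measure.map q lam) lam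
    set r := (Measure.map q lam).haarScalarFactor lam with hr
    have huniv : (1 : ENNReal) = (r : ENNReal) * 1 := by
      calc (1 : ENNReal) = (Measure.map q lam) Set.univ := (measure_univ).symm
      _ = (r • lam) Set.univ := by rw [← heq]
      _ = (r : ENNReal) * 1 := by
          rw [Measure.smul_apply, measure_univ, ENNReal.smul_def, smul_eq_mul]
    have hr1 : (r : ENNReal) = 1 := by simpa using huniv.symm
    rw [heq]
    ext s hs
    rw [Measure.smul_apply, ENNReal.smul_def, smul_eq_mul, hr1, one_mul]
  -- q is an open map
  have hopen : IsOpenMap q := by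
    set K := MonoidHom.ker Q.toMonoidHom with hK
    set j : (PontryaginDual Γ ⧸ K) →* PontryaginDual Γ := QuotientGroup.kerLift Q.toMonoidHom
      with hj
    have hjc : Continuous j := by
      rw [(QuotientGroup.isOpenQuotientMap_mk (N := K)).isQuotientMap.continuous_iff]
      exact Q.continuous
    have hbij : Function.Bijective j := by
      constructor
      · exact QuotientGroup.kerLift_injective _
      · intro y
        obtain ⟨x, hx⟩ := hsurj y
        exact ⟨QuotientGroup.mk x, by rw [hj, QuotientGroup.kerLift_mk]; rw [hqQ] at hx; exact hx⟩
    have hqfact : q = ⇑j ∘ ⇑(QuotientGroup.mk' K) := by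
      funext x
      simp only [Function.comp_apply, QuotientGroup.mk'_apply]
      rw [hj, QuotientGroup.kerLift_mk, hqQ]
      rfl
    have hhomeo : IsOpenMap ⇑j := by
      have hcont : Continuous ⇑(Equiv.ofBijective ⇑j hbij) := hjc
      exact (hcont.homeoOfEquivCompactToT2 (f := Equiv.ofBijective ⇑j hbij)).isOpenMap
    rw [hqfact]
    exact hhomeo.comp (QuotientGroup.isOpenQuotientMap_mk (N := K)).isOpenMap
  have q1 : q 1 = 1 := by rw [hqQ]; exact map_one Q
  -- null sets map to null sets
  have himg : ∀ S : Set (PontryaginDual Γ), lam S = 0 → lam (q '' S) = 0 := by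
    intro S hS
    haveI := hkerfin
    haveI := Fintype.ofFinite {x : PontryaginDual Γ // q x = 1}
    set k : ℕ := Nat.card {x : PontryaginDual Γ // q x = 1} with hk
    haveI : Nonempty {x : PontryaginDual Γ // q x = 1} := ⟨⟨1, q1⟩⟩
    have hkpos : 0 < k := Nat.card_pos
    refine le_antisymm (ENNReal.le_of_forall_pos_le_add fun ε hε _ => ?_) bot_le
    rw [zero_add]
    set δ : ENNReal := ((ε / k : NNReal) : ENNReal) with hδ
    have hδpos : 0 < δ := by
      rw [hδ, ENNReal.coe_pos]
      exact div_pos hε (by exact_mod_cast hkpos)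
    obtain ⟨U, hUS, hUopen, hUlt⟩ := Set.exists_isOpen_lt_of_lt S δ (by rw [hS]; exact hδpos)
    have hsub : q ⁻¹' (q '' U) ⊆
        ⋃ κ : {x : PontryaginDual Γ // q x = 1}, (fun y => κ.1 * y) '' U := by
      intro x hx
      obtain ⟨u, huU, hqu⟩ := hx
      refine Set.mem_iUnion.mpr ⟨⟨x * u⁻¹, by rw [qmul, qinv, hqu]; simp⟩, ⟨u, huU, ?_⟩⟩
      simp only
      group
    have h1 : lam (q '' S) ≤ lam (q '' U) := measure_mono (Set.image_mono hUS)
    have h2 : lam (q '' U) = lam (q ⁻¹' (q '' U)) := by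
      conv_lhs => rw [← hmap]
      rw [Measure.map_apply qmeas (hopen U hUopen).measurableSet]
    have h3 : lam (q ⁻¹' (q '' U)) ≤ (k : ENNReal) * lam U := by
      refine le_trans (measure_mono hsub) (le_trans (measure_iUnion_le _) ?_)
      have h4 : ∀ κ : {x : PontryaginDual Γ // q x = 1},
          lam ((fun y => κ.1 * y) '' U) = lam U := by
        intro κ
        rw [Set.image_mul_left, measure_preimage_mul]
      rw [tsum_fintype]
      rw [Finset.sum_congr rfl (fun κ _ => h4 κ), Finset.sum_const, nsmul_eq_mul]
      rw [hk, Nat.card_eq_fintype_card]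
      simp
    have h5 : (k : ENNReal) * lam U ≤ (k : ENNReal) * δ := by
      exact mul_le_mul_right hUlt.le _
    have h6 : (k : ENNReal) * δ = (ε : ENNReal) := by
      rw [hδ, ← ENNReal.coe_natCast k, ← ENNReal.coe_mul]
      congr 1
      rw [mul_div_cancel₀]
      exact_mod_cast hkpos.ne'
    calc lam (q '' S) ≤ lam (q '' U) := h1
      _ = lam (q ⁻¹' (q '' U)) := h2
      _ ≤ (k : ENNReal) * lam U := h3
      _ ≤ (k : ENNReal) * δ := h5
      _ = (ε : ENNReal) := h6
  -- iterated
  have himgn : ∀ (n : ℕ) (S : Set (PontryaginDual Γ)), lam S = 0 → lam (q^[n] '' S) = 0 := by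
    intro n
    induction n with
    | zero => intro S hS; simpa using hS
    | succ n ih =>
      intro S hS
      rw [Function.iterate_succ', Set.image_comp]
      exact himg _ (ih S hS)
  have htrans : ∀ (n : ℕ) (P : PontryaginDual Γ → Prop), (∀ᵐ ζ ∂lam, P ζ) →
      ∀ᵐ ω ∂lam, ∀ ζ, q^[n] ζ = ω → P ζ := by
    intro n P hP
    rw [ae_iff] at hP ⊢
    refine measure_mono_null ?_ (himgn n _ hP)
    intro ω hω
    simp only [Set.mem_setOf_eq] at hω
    push_neg at hω
    obtain ⟨ζ, hζ, hPζ⟩ := hω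
    exact ⟨ζ, hPζ, hζ⟩
  -- more fiber finiteness
  have hfibn : ∀ (n : ℕ) (ω : PontryaginDual Γ), Finite {ζ : PontryaginDual Γ // q^[n] ζ = ω} := by
    intro n
    induction n with
    | zero =>
      intro ω
      haveI : Subsingleton {ζ : PontryaginDual Γ // q^[0] ζ = ω} := by
        constructor
        rintro ⟨a, ha⟩ ⟨b, hb⟩
        simp only [Function.iterate_zero_apply] at ha hb
        exact Subtype.ext (ha.trans hb.symm)
      infer_instance
    | succ n ih =>
      intro ω
      haveI : Finite {η : PontryaginDual Γ // q^[n] η = ω} := ih ω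
      haveI : ∀ η : {η : PontryaginDual Γ // q^[n] η = ω},
          Finite {ζ : PontryaginDual Γ // q ζ = η.1} := fun η => hfib1 η.1
      exact Finite.of_equiv _ (fiberEquiv q n ω).symm
  -- main argument
  intro n hn1
  obtain ⟨g, hg, hge⟩ := hfint n
  have hNC : (N : ℂ) ≠ 0 := Nat.cast_ne_zero.mpr hN.ne'
  have hsuppSn : ∀ (k : ℕ) (ω : PontryaginDual Γ) (i : Fin c), m ω < (i : ℕ) + 1 →
      (filterIsometry c H q)^[k] g ω i = 0 := by
    intro k
    induction k with
    | zero => exact hg.2.1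
    | succ k ih =>
      intro ω i him
      rw [Function.iterate_succ_apply']
      exact iso_supp hHsupp _ ω i him
  have P2 : ∀ k : ℕ, ∀ᵐ ω ∂lam,
      (filterAdjoint c N H q)^[k] ((filterIsometry c H q)^[k] g) ω = g ω := by
    intro k
    induction k with
    | zero => filter_upwards with ω using rfl
    | succ k ih =>
      filter_upwards [ih, htrans k _ hHfilter] with ω hIH hfil
      calc (filterAdjoint c N H q)^[k+1] ((filterIsometry c H q)^[k+1] g) ω
          = (filterAdjoint c N H q)^[k]
              (filterAdjoint c N H q ((filterIsometry c H q)^[k+1] g)) ω := by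
            rw [Function.iterate_succ_apply]
        _ = (filterAdjoint c N H q)^[k] ((filterIsometry c H q)^[k] g) ω := by
            apply adj_congr_fiber
            intro ζ hζ
            rw [Function.iterate_succ_apply' (filterIsometry c H q)]
            haveI := hfib1 ζ
            exact adj_iso_apply hNC ζ (hfil ζ hζ) _ (fun i him => hsuppSn k ζ i him)
        _ = g ω := hIH
  have P1 : ∀ k : ℕ, ∀ᵐ ω ∂lam,
      ∑ᶠ ζ : {ζ : PontryaginDual Γ // q^[k] ζ = ω},
        (∑ i : Fin c, ‖((filterIsometry c H q)^[k] g) ζ.1 i‖ ^ 2)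
      = (N : ℝ) ^ k * ∑ i : Fin c, ‖g ω i‖ ^ 2 := by
    intro k
    induction k with
    | zero =>
      filter_upwards with ω
      rw [pow_zero, one_mul]
      refine (finsum_eq_single _ (⟨ω, rfl⟩ : {ζ : PontryaginDual Γ // q^[0] ζ = ω})
        fun b hb => ?_).trans rfl
      exact absurd (Subtype.ext (by simpa using b.2)) hb
    | succ k ih =>
      filter_upwards [ih, htrans k _ hHfilter] with ω hIH hfil
      haveI : Finite {η : PontryaginDual Γ // q^[k] η = ω} := hfibn k ω
      haveI := Fintype.ofFinite {η : PontryaginDual Γ // q^[k] η = ω}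
      haveI : ∀ η : {η : PontryaginDual Γ // q^[k] η = ω},
          Finite {ζ : PontryaginDual Γ // q ζ = η.1} := fun η => hfib1 η.1
      haveI : ∀ η : {η : PontryaginDual Γ // q^[k] η = ω},
          Fintype {ζ : PontryaginDual Γ // q ζ = η.1} := fun η => Fintype.ofFinite _
      haveI : Finite {ζ : PontryaginDual Γ // q^[k+1] ζ = ω} := hfibn (k+1) ω
      haveI := Fintype.ofFinite {ζ : PontryaginDual Γ // q^[k+1] ζ = ω}
      have inner : ∀ η : {η : PontryaginDual Γ // q^[k] η = ω},
          (∑ ζ : {ζ : PontryaginDual Γ // q ζ = η.1},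
            ∑ i : Fin c, ‖((filterIsometry c H q)^[k+1] g) ζ.1 i‖ ^ 2)
          = (N : ℝ) * ∑ i : Fin c, ‖((filterIsometry c H q)^[k] g) η.1 i‖ ^ 2 := by
        intro η
        have h5 : ∀ ζ : {ζ : PontryaginDual Γ // q ζ = η.1},
            (∑ i : Fin c, ‖((filterIsometry c H q)^[k+1] g) ζ.1 i‖ ^ 2)
            = ∑ i : Fin c, ‖((H ζ.1)ᵀ.mulVec (((filterIsometry c H q)^[k] g) η.1)) i‖ ^ 2 := by
          rintro ⟨ζ, hζ⟩
          have h6 : ((filterIsometry c H q)^[k+1] g) ζ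
              = (H ζ)ᵀ.mulVec (((filterIsometry c H q)^[k] g) η.1) := by
            rw [Function.iterate_succ_apply' (filterIsometry c H q)]
            show (H ζ)ᵀ.mulVec (((filterIsometry c H q)^[k] g) (q ζ)) = _
            rw [hζ]
          simp only [h6]
        rw [Finset.sum_congr rfl (fun ζ _ => h5 ζ), ← finsum_eq_sum_of_fintype]
        exact iso_fiber_normsq η.1 (hfil η.1 η.2) _ (fun i him => hsuppSn k η.1 i him)
      rw [finsum_eq_sum_of_fintype]
      rw [← Equiv.sum_comp (fiberEquiv q k ω).symm]
      rw [← Finset.univ_sigma_univ, Finset.sum_sigma]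
      calc ∑ η : {η : PontryaginDual Γ // q^[k] η = ω},
            ∑ ζ : {ζ : PontryaginDual Γ // q ζ = η.1},
              ∑ i : Fin c, ‖((filterIsometry c H q)^[k+1] g)
                ((fiberEquiv q k ω).symm ⟨η, ζ⟩).1 i‖ ^ 2
          = ∑ η : {η : PontryaginDual Γ // q^[k] η = ω},
            (N : ℝ) * ∑ i : Fin c, ‖((filterIsometry c H q)^[k] g) η.1 i‖ ^ 2 := by
            refine Finset.sum_congr rfl fun η _ => ?_
            rw [← inner η]
            exact Finset.sum_congr rfl fun ζ _ => rfl
        _ = (N : ℝ) * ∑ η : {η : PontryaginDual Γ // q^[k] η = ω},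
            ∑ i : Fin c, ‖((filterIsometry c H q)^[k] g) η.1 i‖ ^ 2 := by
            rw [Finset.mul_sum]
        _ = (N : ℝ) ^ (k+1) * ∑ i : Fin c, ‖g ω i‖ ^ 2 := by
            rw [← finsum_eq_sum_of_fintype, hIH]
            ring
  have hae : ∀ᵐ ζ ∂lam, (filterIsometry c H q)^[n] g ζ = f ζ := hge
  filter_upwards [P1 n, P2 n, htrans n _ hae] with ω h1 h2 h3
  have hTf : (filterAdjoint c N H q)^[n] f ω
      = (filterAdjoint c N H q)^[n] ((filterIsometry c H q)^[n] g) ω :=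
    adj_congr_fiber n _ _ ω (fun ζ hζ => (h3 ζ hζ).symm)
  have h4 : (∑ᶠ ζ : {ζ : PontryaginDual Γ // q^[n] ζ = ω}, ∑ i : Fin c, ‖f ζ.1 i‖ ^ 2)
      = ∑ᶠ ζ : {ζ : PontryaginDual Γ // q^[n] ζ = ω},
          ∑ i : Fin c, ‖((filterIsometry c H q)^[n] g) ζ.1 i‖ ^ 2 :=
    finsum_congr fun ζ => by rw [h3 ζ.1 ζ.2]
  rw [hTf, h2, h4, h1, inv_mul_cancel_left₀ (pow_ne_zero _ (Nat.cast_ne_zero.mpr hN.ne'))]
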